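/- Set y := q + ε·[p]_{q^{p^α}} ∈ R. For every integer n ≥ 0 one has [p]_{y^{p^{n+α}}} = [p]_{q^{p^{n+α}}} · (1 + ε·[p^n]_{q^{p^α}} · ∑_{i=1}^{p−1} q^{i·p^{n+α}−1}·[i·p^α]_{q^{p^{α+n+1}}}) in R. In particular (the case n = 0), [p]_{y^{p^α}} lies in the ideal of R generated by d = [p]_{q^{p^α}}, so the map q ↦ y induces ring homomorphisms A/(d^n) → R/(d^n) for all n. -/

import Mathlib

open Finset

/-- The q-analogue `[n]_t = ∑_{i=0}^{n-1} t^i`. -/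
def qan {A : Type*} [CommRing A] (t : A) (n : ℕ) : A := ∑ i ∈ Finset.range n, t ^ i

/-- `A := W(k)⟦q−1⟧`, the power series ring over the `p`-typical Witt vectors of `k`;
`q` denotes `1` plus the power series variable. -/
noncomputable def qq (p : ℕ) [Fact p.Prime] (k : Type*) [CommRing k] :
    PowerSeries (WittVector p k) :=
  1 + PowerSeries.X

/-- The distinguished element `d := [p]_{q^{p^α}}` of `A`. -/
noncomputable def dd (p α : ℕ) [Fact p.Prime] (k : Type*) [CommRing k] :
    PowerSeries (WittVector p k) :=
  qan ((qq p k) ^ p ^ α) p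

/-- The polynomial `ε² − q·(q^{p^α}−1)·ε` over `A`, whose adjunction defines `R`. -/
noncomputable def relPoly (p α : ℕ) [Fact p.Prime] (k : Type*) [CommRing k] :
    Polynomial (PowerSeries (WittVector p k)) :=
  Polynomial.X ^ 2 - Polynomial.C (qq p k * ((qq p k) ^ p ^ α - 1)) * Polynomial.X

/-- `R := A[ε]/(ε² − q·(q^{p^α}−1)·ε)`, a free `A`-module with basis `1, ε`. -/
noncomputable abbrev Rring (p α : ℕ) [Fact p.Prime] (k : Type*) [CommRing k] :=
  AdjoinRoot (relPoly p α k)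

/-- `ε ∈ R`. -/
noncomputable def eps (p α : ℕ) [Fact p.Prime] (k : Type*) [CommRing k] : Rring p α k :=
  AdjoinRoot.root (relPoly p α k)

/-- `y := q + ε·[p]_{q^{p^α}} ∈ R`. -/
noncomputable def yy (p α : ℕ) [Fact p.Prime] (k : Type*) [CommRing k] : Rring p α k :=
  algebraMap _ _ (qq p k) + eps p α k * algebraMap _ _ (dd p α k)

lemma eps_sq (p α : ℕ) [Fact p.Prime] (k : Type*) [CommRing k] :
    eps p α k ^ 2 = algebraMap _ _ (qq p k * ((qq p k) ^ p ^ α - 1)) * eps p α k := by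
  have h := AdjoinRoot.eval₂_root (relPoly p α k)
  unfold relPoly at h
  simp only [Polynomial.eval₂_sub, Polynomial.eval₂_mul, Polynomial.eval₂_pow,
    Polynomial.eval₂_X, Polynomial.eval₂_C] at h
  rw [AdjoinRoot.algebraMap_eq, eps]
  unfold relPoly
  exact sub_eq_zero.mp h

lemma eps_comb (p α : ℕ) [Fact p.Prime] (k : Type*) [CommRing k]
    (a b x y : PowerSeries (WittVector p k)) :
    (algebraMap _ (Rring p α k) a + eps p α k * algebraMap _ _ b) *
      (algebraMap _ _ x + eps p α k * algebraMap _ _ y) =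
    algebraMap _ _ (a * x) + eps p α k *
      algebraMap _ _ (a * y + b * x + (qq p k * ((qq p k) ^ p ^ α - 1)) * (b * y)) := by
  have h := eps_sq p α k
  simp only [map_mul, map_add] at h ⊢
  linear_combination (algebraMap _ (Rring p α k) b * algebraMap _ (Rring p α k) y) * h

lemma qan_succ {A : Type*} [CommRing A] (t : A) (n : ℕ) : qan t (n + 1) = qan t n + t ^ n :=
  Finset.sum_range_succ _ n

lemma qan_add {A : Type*} [CommRing A] (t : A) (a b : ℕ) :
    qan t (a + b) = qan t a + t ^ a * qan t b := by
  unfold qan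
  rw [Finset.sum_range_add, Finset.mul_sum]
  simp [pow_add]

lemma qan_mul {A : Type*} [CommRing A] (t : A) (a b : ℕ) :
    qan t (a * b) = qan t a * qan (t ^ a) b := by
  induction b with
  | zero => simp [qan]
  | succ b ih =>
    rw [Nat.mul_succ, qan_add, ih, qan_succ, pow_mul]
    ring

lemma qan_geom {A : Type*} [CommRing A] (t : A) (n : ℕ) : (t - 1) * qan t n = t ^ n - 1 := by
  rw [mul_comm]; exact geom_sum_mul t n

lemma yy_pow (p α : ℕ) [Fact p.Prime] (k : Type*) [CommRing k] (m : ℕ) :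
    yy p α k ^ (m + 1) =
      algebraMap _ _ ((qq p k) ^ (m + 1)) +
        eps p α k * algebraMap _ _
          ((qq p k) ^ m * qan ((qq p k) ^ p ^ α) ((m + 1) * p)) := by
  induction m with
  | zero => simp [yy, dd]
  | succ m ih =>
    have hyy : yy p α k =
        algebraMap _ _ (qq p k) + eps p α k * algebraMap _ _ (dd p α k) := rfl
    rw [pow_succ, ih, hyy, eps_comb, ← pow_succ]
    have key : qq p k ^ (m + 1) * qan ((qq p k) ^ p ^ α) ((m + 1 + 1) * p) =
        qq p k ^ (m + 1) * dd p α k +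
          qq p k ^ m * qan ((qq p k) ^ p ^ α) ((m + 1) * p) * qq p k +
          qq p k * (qq p k ^ p ^ α - 1) *
            (qq p k ^ m * qan ((qq p k) ^ p ^ α) ((m + 1) * p) * dd p α k) := by
      have h1 : (m + 1 + 1) * p = p + (m + 1) * p := by ring
      have h2 := qan_geom ((qq p k) ^ p ^ α) p
      rw [h1, qan_add]
      unfold dd
      linear_combination (-(qq p k ^ (m + 1)) * qan ((qq p k) ^ p ^ α) ((m + 1) * p)) * h2
    rw [← key]

/-- With `y := q + ε·[p]_{q^{p^α}} ∈ R`, for every `n ≥ 0` one has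
`[p]_{y^{p^{n+α}}} = [p]_{q^{p^{n+α}}}·(1 + ε·[p^n]_{q^{p^α}}·∑_{i=1}^{p−1}
q^{i·p^{n+α}−1}·[i·p^α]_{q^{p^{α+n+1}}})` in `R`; in particular (the case `n = 0`)
`[p]_{y^{p^α}}` lies in the ideal of `R` generated by `d = [p]_{q^{p^α}}`. -/
theorem stmt1 (p : ℕ) [Fact p.Prime] (α : ℕ)
    (k : Type*) [Field k] [CharP k p] [PerfectRing k p] :
    (∀ n : ℕ,
      qan ((yy p α k) ^ p ^ (n + α)) p =
        algebraMap _ (Rring p α k) (qan ((qq p k) ^ p ^ (n + α)) p) *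
          (1 + eps p α k *
            algebraMap _ _ (qan ((qq p k) ^ p ^ α) (p ^ n) *
              ∑ i ∈ Finset.Icc 1 (p - 1),
                (qq p k) ^ (i * p ^ (n + α) - 1) *
                  qan ((qq p k) ^ p ^ (α + n + 1)) (i * p ^ α)))) ∧
    qan ((yy p α k) ^ p ^ α) p ∈
      Ideal.span {algebraMap _ (Rring p α k) (dd p α k)} := by
  obtain ⟨P, rfl⟩ : ∃ P, p = P + 1 :=
    ⟨p - 1, (Nat.succ_pred_eq_of_pos (Fact.out : p.Prime).pos).symm⟩
  simp only [Nat.add_sub_cancel]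
  have main : ∀ n : ℕ,
      qan ((yy (P + 1) α k) ^ (P + 1) ^ (n + α)) (P + 1) =
        algebraMap _ (Rring (P + 1) α k) (qan ((qq (P + 1) k) ^ (P + 1) ^ (n + α)) (P + 1)) *
          (1 + eps (P + 1) α k *
            algebraMap _ _ (qan ((qq (P + 1) k) ^ (P + 1) ^ α) ((P + 1) ^ n) *
              ∑ i ∈ Finset.Icc 1 P,
                (qq (P + 1) k) ^ (i * (P + 1) ^ (n + α) - 1) *
                  qan ((qq (P + 1) k) ^ (P + 1) ^ (α + n + 1)) (i * (P + 1) ^ α))) := by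
    intro n
    set q := qq (P + 1) k with hq
    set t := q ^ (P + 1) ^ α with ht
    set N := (P + 1) ^ (n + α) with hN
    have hNpos : 0 < N := pow_pos (Nat.succ_pos P) _
    have hterm : ∀ i : ℕ, yy (P + 1) α k ^ (N * (i + 1)) =
        algebraMap _ _ (q ^ (N * (i + 1))) + eps (P + 1) α k *
          algebraMap _ _ (q ^ (N * (i + 1) - 1) * qan t (N * (i + 1) * (P + 1))) := by
      intro i
      have hpos : 0 < N * (i + 1) := Nat.mul_pos hNpos (Nat.succ_pos i)
      have hm : N * (i + 1) - 1 + 1 = N * (i + 1) := Nat.succ_pred_eq_of_pos hpos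
      have h := yy_pow (P + 1) α k (N * (i + 1) - 1)
      rw [hm] at h
      exact h
    have hL : qan ((yy (P + 1) α k) ^ N) (P + 1) =
        (∑ i ∈ Finset.range P, (algebraMap _ (Rring (P + 1) α k) (q ^ (N * (i + 1))) +
          eps (P + 1) α k *
          algebraMap _ _ (q ^ (N * (i + 1) - 1) * qan t (N * (i + 1) * (P + 1))))) + 1 := by
      unfold qan
      rw [Finset.sum_range_succ']
      simp only [pow_zero]
      congr 1
      refine Finset.sum_congr rfl fun i _ => ?_
      rw [← pow_mul, hterm i]
      rfl
    have hQ : qan (q ^ N) (P + 1) = (∑ i ∈ Finset.range P, q ^ (N * (i + 1))) + 1 := by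
      unfold qan
      rw [Finset.sum_range_succ']
      simp only [pow_zero]
      congr 1
      refine Finset.sum_congr rfl fun i _ => ?_
      rw [← pow_mul]
    have hS : qan (q ^ N) (P + 1) * (qan t ((P + 1) ^ n) *
          ∑ i ∈ Finset.Icc 1 P,
            q ^ (i * N - 1) * qan (q ^ (P + 1) ^ (α + n + 1)) (i * (P + 1) ^ α)) =
        ∑ i ∈ Finset.range P, q ^ (N * (i + 1) - 1) * qan t (N * (i + 1) * (P + 1)) := by
      have hIcc : Finset.Icc 1 P = Finset.Ico 1 (P + 1) := (Finset.Ico_add_one_right_eq_Icc 1 P).symm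
      rw [hIcc, Finset.sum_Ico_eq_sum_range]
      simp only [Nat.add_sub_cancel]
      rw [Finset.mul_sum, Finset.mul_sum]
      refine Finset.sum_congr rfl fun i _ => ?_
      have e1 : N * (i + 1) * (P + 1) = (P + 1) ^ n * ((1 + i) * (P + 1) ^ α * (P + 1)) := by
        rw [hN]; ring
      have e2 : t ^ (P + 1) ^ n = q ^ N := by
        rw [ht, ← pow_mul, ← pow_add, hN, add_comm α n]
      have e3 : (q ^ N) ^ (P + 1) = q ^ (P + 1) ^ (α + n + 1) := by
        rw [← pow_mul]
        congr 1
        rw [hN]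
        ring
      have e4 : (1 + i) * N - 1 = N * (i + 1) - 1 := by
        rw [add_comm 1 i, mul_comm]
      have e5 : (1 + i) * (P + 1) ^ α * (P + 1) = (P + 1) * ((1 + i) * (P + 1) ^ α) := by ring
      rw [e4]
      conv_rhs => rw [e1, qan_mul, e2, e5, qan_mul, e3]
      ring
    rw [hL, Finset.sum_add_distrib, ← Finset.mul_sum, ← map_sum, ← map_sum]
    rw [mul_add, mul_one, mul_left_comm, ← map_mul, hS, hQ]
    rw [map_add, map_one]
    ring
  refine ⟨main, ?_⟩
  have h0 := main 0
  simp only [zero_add] at h0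
  rw [Ideal.mem_span_singleton]
  exact ⟨_, by rw [dd]; exact h0⟩
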